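/- Policy gradient theorem for Markov games: for every initial distribution μ, state s, policy π, player i and action a_i, ∂V_i(μ,π)/∂π_i(s,a_i) = (1/(1−δ)) d_μ^π(s) Q_i(s,a_i;π), where d_μ^π(s) = (1−δ) ∑_{s^0} μ(s^0) ∑_{k≥0} δ^k Pr(s^k = s | s^0, π). -/

import Mathlib

open Finset

namespace MPG

def simplex {α : Type*} [Fintype α] (p : α → ℝ) : Prop :=
  (∀ x, 0 ≤ p x) ∧ ∑ x, p x = 1

variable {S I : Type*} {A : I → Type*}
variable [Fintype S] [DecidableEq S] [Fintype I] [DecidableEq I]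
  [∀ i, Fintype (A i)] [∀ i, DecidableEq (A i)]

def IsPolicy (π : ∀ i, S → A i → ℝ) : Prop := ∀ i s, simplex (π i s)

def IsKernel (P : S → (∀ i, A i) → S → ℝ) : Prop := ∀ s a, simplex (P s a)

noncomputable def jointProb (π : ∀ i, S → A i → ℝ) (s : S) (a : ∀ i, A i) : ℝ :=
  ∏ i, π i s (a i)

noncomputable def stepDist (P : S → (∀ i, A i) → S → ℝ) (π : ∀ i, S → A i → ℝ)
    (ν : S → ℝ) : S → ℝ :=
  fun s' => ∑ s, ν s * ∑ a, jointProb π s a * P s a s'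

noncomputable def expReward (f : S → (∀ i, A i) → ℝ) (π : ∀ i, S → A i → ℝ)
    (ν : S → ℝ) : ℝ :=
  ∑ s, ν s * ∑ a, jointProb π s a * f s a

def dirac (s : S) : S → ℝ := fun s' => if s' = s then 1 else 0

/-- Value function: expected total discounted payoff of player `i` starting at `s`. -/
noncomputable def V (u : I → S → (∀ i, A i) → ℝ) (P : S → (∀ i, A i) → S → ℝ)
    (δ : ℝ) (π : ∀ i, S → A i → ℝ) (i : I) (s : S) : ℝ :=
  ∑' k : ℕ, δ ^ k * expReward (u i) π ((stepDist P π)^[k] (dirac s))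

def pureAt {i : I} (ai : A i) : S → A i → ℝ := fun _ b => if b = ai then 1 else 0

/-- The policy profile where player `i` deterministically plays `ai`. -/
noncomputable def devPolicy (π : ∀ i, S → A i → ℝ) (i : I) (ai : A i) :
    ∀ j, S → A j → ℝ :=
  Function.update π i (pureAt ai)

/-- Q-function: one-stage deviation value of player `i`. -/
noncomputable def Q (u : I → S → (∀ i, A i) → ℝ) (P : S → (∀ i, A i) → S → ℝ)
    (δ : ℝ) (π : ∀ i, S → A i → ℝ) (i : I) (s : S) (ai : A i) : ℝ :=
  ∑ a, jointProb (devPolicy π i ai) s a *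
    (u i s a + δ * ∑ s', P s a s' * V u P δ π i s')

noncomputable def Vmu (u : I → S → (∀ i, A i) → ℝ) (P : S → (∀ i, A i) → S → ℝ)
    (δ : ℝ) (π : ∀ i, S → A i → ℝ) (i : I) (μ : S → ℝ) : ℝ :=
  ∑ s, μ s * V u P δ π i s

/-- Discounted state visitation distribution. -/
noncomputable def dvisit (P : S → (∀ i, A i) → S → ℝ) (δ : ℝ)
    (π : ∀ i, S → A i → ℝ) (μ : S → ℝ) (s : S) : ℝ :=
  (1 - δ) * ∑ s0, μ s0 * ∑' k : ℕ, δ ^ k * ((stepDist P π)^[k] (dirac s0)) s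

/-- Stationary Nash equilibrium. -/
def IsNash (u : I → S → (∀ i, A i) → ℝ) (P : S → (∀ i, A i) → S → ℝ)
    (δ : ℝ) (π : ∀ i, S → A i → ℝ) : Prop :=
  IsPolicy π ∧ ∀ (i : I) (πi : S → A i → ℝ), (∀ s, simplex (πi s)) →
    ∀ μ : S → ℝ, simplex μ →
      Vmu u P δ (Function.update π i πi) i μ ≤ Vmu u P δ π i μ


/-- The policy profile where the single entry `π_i(s,a_i)` is replaced by `t`. -/
noncomputable def updateEntry (π : ∀ i, S → A i → ℝ) (i : I) (s : S) (ai : A i)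
    (t : ℝ) : ∀ j, S → A j → ℝ :=
  Function.update π i (fun s' b => if s' = s ∧ b = ai then t else π i s' b)
section Aux
set_option linter.unusedSectionVars false
variable {S I : Type*} {A : I → Type*}
variable [Fintype S] [DecidableEq S] [Fintype I] [DecidableEq I]
  [∀ i, Fintype (A i)] [∀ i, DecidableEq (A i)]

lemma jointProb_nonneg {π : ∀ i, S → A i → ℝ} (hπ : IsPolicy π) (s : S) (a : ∀ i, A i) :
    0 ≤ jointProb π s a :=
  Finset.prod_nonneg fun j _ => (hπ j s).1 (a j)

lemma sum_jointProb {π : ∀ i, S → A i → ℝ} (hπ : IsPolicy π) (s : S) :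
    ∑ a, jointProb π s a = 1 := by
  unfold jointProb
  rw [← Fintype.prod_sum]
  exact Finset.prod_eq_one fun j _ => (hπ j s).2

lemma devPolicy_isPolicy {π : ∀ i, S → A i → ℝ} (hπ : IsPolicy π) (i : I) (ai : A i) :
    IsPolicy (devPolicy π i ai) := by
  intro j s
  unfold devPolicy
  rcases eq_or_ne j i with rfl | hj
  · rw [Function.update_self]
    constructor
    · intro b; unfold pureAt; split <;> norm_num
    · simp [pureAt]
  · rw [Function.update_of_ne hj]; exact hπ j s

lemma updateEntry_self (π : ∀ i, S → A i → ℝ) (i : I) (s : S) (ai : A i) :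
    updateEntry π i s ai (π i s ai) = π := by
  unfold updateEntry
  have : (fun s' b => if s' = s ∧ b = ai then π i s ai else π i s' b) = π i := by
    funext s' b
    split
    · rcases ‹s' = s ∧ b = ai› with ⟨rfl, rfl⟩; rfl
    · rfl
  rw [this, Function.update_eq_self]

lemma jointProb_updateEntry (π : ∀ i, S → A i → ℝ) (i : I) (s : S) (ai : A i)
    (t : ℝ) (s'' : S) (a : ∀ i, A i) :
    jointProb (updateEntry π i s ai t) s'' a
      = jointProb π s'' a + (t - π i s ai) *
        (if s'' = s then jointProb (devPolicy π i ai) s a else 0) := by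
  unfold jointProb updateEntry devPolicy
  rw [← Finset.prod_erase_mul _ _ (Finset.mem_univ i),
    ← Finset.prod_erase_mul _ _ (Finset.mem_univ i),
    ← Finset.prod_erase_mul _ _ (Finset.mem_univ i)]
  have h1 : ∀ (π' : S → A i → ℝ) (σ : S),
      ∏ j ∈ Finset.univ.erase i, (Function.update π i π') j σ (a j)
      = ∏ j ∈ Finset.univ.erase i, π j σ (a j) := by
    intro π' σ
    refine Finset.prod_congr rfl fun j hj => ?_
    rw [Function.update_of_ne (Finset.ne_of_mem_erase hj)]
  rw [h1, h1, Function.update_self, Function.update_self]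
  unfold pureAt
  rcases eq_or_ne s'' s with rfl | hs
  · rcases eq_or_ne (a i) ai with ha | ha
    · rw [if_pos (⟨rfl, ha⟩ : s'' = s'' ∧ a i = ai), if_pos rfl, if_pos ha, ha]
      ring
    · rw [if_neg (fun h => ha h.2), if_pos rfl, if_neg ha]
      ring
  · rw [if_neg (fun h => hs h.1), if_neg hs]
    ring

/-- Transition row weights for an arbitrary payoff `F`. -/
lemma sum_joint_updateEntry (π : ∀ i, S → A i → ℝ) (i : I) (s : S) (ai : A i)
    (P : S → (∀ i, A i) → S → ℝ) (t : ℝ) (F : S → (∀ i, A i) → ℝ) (ν : S → ℝ) :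
    ∑ s1, ν s1 * ∑ a, jointProb (updateEntry π i s ai t) s1 a * F s1 a
      = (∑ s1, ν s1 * ∑ a, jointProb π s1 a * F s1 a)
        + (t - π i s ai) * (ν s * ∑ a, jointProb (devPolicy π i ai) s a * F s a) := by
  have key : ∀ s1, ν s1 * ∑ a, jointProb (updateEntry π i s ai t) s1 a * F s1 a
      = ν s1 * ∑ a, jointProb π s1 a * F s1 a
        + (if s1 = s then (t - π i s ai) *
            (ν s * ∑ a, jointProb (devPolicy π i ai) s a * F s a) else 0) := by
    intro s1
    rcases eq_or_ne s1 s with h | h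
    · subst h
      have e1 : ∑ a, jointProb (updateEntry π i s1 ai t) s1 a * F s1 a
          = (∑ a, jointProb π s1 a * F s1 a)
            + (t - π i s1 ai) * ∑ a, jointProb (devPolicy π i ai) s1 a * F s1 a := by
        rw [Finset.mul_sum, ← Finset.sum_add_distrib]
        refine Finset.sum_congr rfl fun a _ => ?_
        rw [jointProb_updateEntry, if_pos rfl]; ring
      rw [e1, if_pos rfl]; ring
    · have e1 : ∑ a, jointProb (updateEntry π i s ai t) s1 a * F s1 a
          = ∑ a, jointProb π s1 a * F s1 a := by
        refine Finset.sum_congr rfl fun a _ => ?_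
        rw [jointProb_updateEntry, if_neg h, mul_zero, add_zero]
      rw [e1, if_neg h, add_zero]
  calc ∑ s1, ν s1 * ∑ a, jointProb (updateEntry π i s ai t) s1 a * F s1 a
      = ∑ s1, (ν s1 * ∑ a, jointProb π s1 a * F s1 a
        + (if s1 = s then (t - π i s ai) *
            (ν s * ∑ a, jointProb (devPolicy π i ai) s a * F s a) else 0)) :=
        Finset.sum_congr rfl fun s1 _ => key s1
    _ = _ := by
        rw [Finset.sum_add_distrib, Finset.sum_ite_eq' Finset.univ s]
        simp

lemma step_decomp (π : ∀ i, S → A i → ℝ) (i : I) (s : S) (ai : A i)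
    (P : S → (∀ i, A i) → S → ℝ) (t : ℝ) (ν : S → ℝ) (s' : S) :
    stepDist P (updateEntry π i s ai t) ν s'
      = stepDist P π ν s'
        + (t - π i s ai) * (ν s * ∑ a, jointProb (devPolicy π i ai) s a * P s a s') :=
  sum_joint_updateEntry π i s ai P t (fun s1 a => P s1 a s') ν

lemma reward_decomp (u : I → S → (∀ i, A i) → ℝ) (π : ∀ i, S → A i → ℝ) (i : I) (s : S)
    (ai : A i) (P : S → (∀ i, A i) → S → ℝ) (t : ℝ) (ν : S → ℝ) :
    expReward (u i) (updateEntry π i s ai t) ν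
      = expReward (u i) π ν
        + (t - π i s ai) * (ν s * ∑ a, jointProb (devPolicy π i ai) s a * u i s a) :=
  sum_joint_updateEntry π i s ai P t (u i) ν

lemma mrow_nonneg {π' : ∀ i, S → A i → ℝ} {P : S → (∀ i, A i) → S → ℝ}
    (hπ' : IsPolicy π') (hP : IsKernel P) (s1 s' : S) :
    0 ≤ ∑ a, jointProb π' s1 a * P s1 a s' :=
  Finset.sum_nonneg fun a _ => mul_nonneg (jointProb_nonneg hπ' _ _) ((hP s1 a).1 s')

lemma mrow_sum {π' : ∀ i, S → A i → ℝ} {P : S → (∀ i, A i) → S → ℝ}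
    (hπ' : IsPolicy π') (hP : IsKernel P) (s1 : S) :
    ∑ s', ∑ a, jointProb π' s1 a * P s1 a s' = 1 := by
  rw [Finset.sum_comm]
  have : ∀ a, ∑ s', jointProb π' s1 a * P s1 a s' = jointProb π' s1 a := by
    intro a; rw [← Finset.mul_sum, (hP s1 a).2, mul_one]
  rw [Finset.sum_congr rfl fun a _ => this a, sum_jointProb hπ' s1]

lemma abs_step_le {π' : ∀ i, S → A i → ℝ} {P : S → (∀ i, A i) → S → ℝ}
    (hπ' : IsPolicy π') (hP : IsKernel P) (ν : S → ℝ) :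
    ∑ s', |stepDist P π' ν s'| ≤ ∑ x, |ν x| := by
  unfold stepDist
  calc ∑ s', |∑ x, ν x * ∑ a, jointProb π' x a * P x a s'|
      ≤ ∑ s', ∑ x, |ν x| * ∑ a, jointProb π' x a * P x a s' := by
        refine Finset.sum_le_sum fun s' _ => (Finset.abs_sum_le_sum_abs _ _).trans ?_
        refine le_of_eq (Finset.sum_congr rfl fun x _ => ?_)
        rw [abs_mul, abs_of_nonneg (mrow_nonneg hπ' hP x s')]
    _ = ∑ x, |ν x| * ∑ s', ∑ a, jointProb π' x a * P x a s' := by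
        rw [Finset.sum_comm]
        exact Finset.sum_congr rfl fun x _ => (Finset.mul_sum _ _ _).symm
    _ = ∑ x, |ν x| := by
        refine Finset.sum_congr rfl fun x _ => ?_
        rw [mrow_sum hπ' hP, mul_one]

lemma abs_le_l1 (ν : S → ℝ) (x0 : S) : |ν x0| ≤ ∑ x, |ν x| :=
  Finset.single_le_sum (f := fun x => |ν x|) (fun x _ => abs_nonneg _) (Finset.mem_univ x0)

lemma abs_stepU_le {π : ∀ i, S → A i → ℝ} {P : S → (∀ i, A i) → S → ℝ}
    (hπ : IsPolicy π) (hP : IsKernel P) (i : I) (s : S) (ai : A i) {t ε : ℝ}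
    (ht : |t - π i s ai| ≤ ε) (ν : S → ℝ) :
    ∑ s', |stepDist P (updateEntry π i s ai t) ν s'| ≤ (1 + ε) * ∑ x, |ν x| := by
  have hchi : ∀ s', 0 ≤ ∑ a, jointProb (devPolicy π i ai) s a * P s a s' :=
    fun s' => mrow_nonneg (devPolicy_isPolicy hπ i ai) hP s s'
  have hchisum : ∑ s', ∑ a, jointProb (devPolicy π i ai) s a * P s a s' = 1 :=
    mrow_sum (devPolicy_isPolicy hπ i ai) hP s
  have hε : 0 ≤ ε := le_trans (abs_nonneg _) ht
  calc ∑ s', |stepDist P (updateEntry π i s ai t) ν s'|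
      ≤ ∑ s', (|stepDist P π ν s'|
          + |t - π i s ai| * (|ν s| * ∑ a, jointProb (devPolicy π i ai) s a * P s a s')) := by
        refine Finset.sum_le_sum fun s' _ => ?_
        rw [step_decomp]
        refine (abs_add_le _ _).trans ?_
        rw [abs_mul, abs_mul, abs_of_nonneg (hchi s')]
    _ = (∑ s', |stepDist P π ν s'|) + |t - π i s ai| * |ν s| := by
        rw [Finset.sum_add_distrib]
        congr 1
        rw [← Finset.mul_sum, ← Finset.mul_sum, hchisum, mul_one]
    _ ≤ (∑ x, |ν x|) + ε * ∑ x, |ν x| := by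
        refine add_le_add (abs_step_le hπ hP ν) ?_
        exact mul_le_mul ht (abs_le_l1 ν s) (abs_nonneg _) hε
    _ = (1 + ε) * ∑ x, |ν x| := by ring

lemma abs_iterU_le {π : ∀ i, S → A i → ℝ} {P : S → (∀ i, A i) → S → ℝ}
    (hπ : IsPolicy π) (hP : IsKernel P) (i : I) (s : S) (ai : A i) {t ε : ℝ}
    (ht : |t - π i s ai| ≤ ε) (ν : S → ℝ) (k : ℕ) :
    ∑ s', |((stepDist P (updateEntry π i s ai t))^[k] ν) s'| ≤ (1 + ε) ^ k * ∑ x, |ν x| := by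
  induction k with
  | zero => simp
  | succ k ih =>
      rw [Function.iterate_succ_apply']
      calc ∑ s', |stepDist P (updateEntry π i s ai t)
            ((stepDist P (updateEntry π i s ai t))^[k] ν) s'|
          ≤ (1 + ε) * ∑ x, |((stepDist P (updateEntry π i s ai t))^[k] ν) x| :=
            abs_stepU_le hπ hP i s ai ht _
        _ ≤ (1 + ε) * ((1 + ε) ^ k * ∑ x, |ν x|) := by
            refine mul_le_mul_of_nonneg_left ih ?_
            have hε : 0 ≤ ε := le_trans (abs_nonneg _) ht
            linarith
        _ = (1 + ε) ^ (k + 1) * ∑ x, |ν x| := by ring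

lemma abs_iter_le {π : ∀ i, S → A i → ℝ} {P : S → (∀ i, A i) → S → ℝ}
    (hπ : IsPolicy π) (hP : IsKernel P) (ν : S → ℝ) (k : ℕ) :
    ∑ s', |((stepDist P π)^[k] ν) s'| ≤ ∑ x, |ν x| := by
  induction k with
  | zero => simp
  | succ k ih =>
      rw [Function.iterate_succ_apply']
      exact (abs_step_le hπ hP _).trans ih

lemma dirac_l1 (s0 : S) : ∑ x, |dirac s0 x| = 1 := by
  unfold dirac
  have : ∀ x : S, |if x = s0 then (1:ℝ) else 0| = if x = s0 then 1 else 0 := by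
    intro x; split <;> simp
  rw [Finset.sum_congr rfl fun x _ => this x, Finset.sum_ite_eq' Finset.univ s0]
  simp

lemma abs_expReward_le (f : S → (∀ i, A i) → ℝ) (π' : ∀ i, S → A i → ℝ) (ν : S → ℝ) :
    |expReward f π' ν| ≤ (∑ s1, |∑ a, jointProb π' s1 a * f s1 a|) * ∑ x, |ν x| := by
  unfold expReward
  calc |∑ s1, ν s1 * ∑ a, jointProb π' s1 a * f s1 a|
      ≤ ∑ s1, |ν s1| * |∑ a, jointProb π' s1 a * f s1 a| := by
        refine (Finset.abs_sum_le_sum_abs _ _).trans (le_of_eq ?_)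
        exact Finset.sum_congr rfl fun s1 _ => abs_mul _ _
    _ ≤ ∑ s1, (∑ x, |ν x|) * |∑ a, jointProb π' s1 a * f s1 a| := by
        refine Finset.sum_le_sum fun s1 _ => ?_
        exact mul_le_mul_of_nonneg_right (abs_le_l1 ν s1) (abs_nonneg _)
    _ = (∑ s1, |∑ a, jointProb π' s1 a * f s1 a|) * ∑ x, |ν x| := by
        rw [← Finset.mul_sum, mul_comm]

/-- Derivative of the iterated state distribution w.r.t. the single policy entry. -/
noncomputable def wfun (P : S → (∀ i, A i) → S → ℝ) (π : ∀ i, S → A i → ℝ)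
    (i : I) (s : S) (ai : A i) (s0 : S) : ℕ → ℝ → S → ℝ
  | 0, _ => fun _ => 0
  | (k+1), x => fun s' =>
      stepDist P (updateEntry π i s ai x) (wfun P π i s ai s0 k x) s'
        + ((stepDist P (updateEntry π i s ai x))^[k] (dirac s0)) s
            * ∑ a, jointProb (devPolicy π i ai) s a * P s a s'

lemma hasDerivAt_iter (P : S → (∀ i, A i) → S → ℝ) (π : ∀ i, S → A i → ℝ)
    (i : I) (s : S) (ai : A i) (s0 : S) (k : ℕ) (x : ℝ) (s' : S) :
    HasDerivAt (fun t => ((stepDist P (updateEntry π i s ai t))^[k] (dirac s0)) s')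
      (wfun P π i s ai s0 k x s') x := by
  induction k generalizing s' with
  | zero => simpa [wfun] using hasDerivAt_const x (dirac s0 s')
  | succ k ih =>
      have hfun : (fun t => ((stepDist P (updateEntry π i s ai t))^[k+1] (dirac s0)) s')
          = fun t => (∑ x1, ((stepDist P (updateEntry π i s ai t))^[k] (dirac s0)) x1
              * (∑ a, jointProb π x1 a * P x1 a s'))
            + (t - π i s ai) * (((stepDist P (updateEntry π i s ai t))^[k] (dirac s0)) s
              * ∑ a, jointProb (devPolicy π i ai) s a * P s a s') := by
        funext t
        rw [Function.iterate_succ_apply', step_decomp]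
        rfl
      rw [hfun]
      have h1 : HasDerivAt (fun t => ∑ x1,
          ((stepDist P (updateEntry π i s ai t))^[k] (dirac s0)) x1
            * (∑ a, jointProb π x1 a * P x1 a s'))
          (∑ x1, wfun P π i s ai s0 k x x1 * (∑ a, jointProb π x1 a * P x1 a s')) x :=
        HasDerivAt.fun_sum fun x1 _ => (ih x1).mul_const _
      have h2 := (((hasDerivAt_id x).sub_const (π i s ai)).fun_mul ((ih s).mul_const
        (∑ a, jointProb (devPolicy π i ai) s a * P s a s')))
      refine (h1.add h2).congr_deriv ?_
      symm
      show stepDist P (updateEntry π i s ai x) (wfun P π i s ai s0 k x) s'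
          + ((stepDist P (updateEntry π i s ai x))^[k] (dirac s0)) s
            * ∑ a, jointProb (devPolicy π i ai) s a * P s a s' = _
      rw [step_decomp]
      unfold stepDist
      simp only [id_eq]
      ring

lemma wfun_l1 {π : ∀ i, S → A i → ℝ} {P : S → (∀ i, A i) → S → ℝ}
    (hπ : IsPolicy π) (hP : IsKernel P) (i : I) (s : S) (ai : A i) (s0 : S)
    {t ε : ℝ} (ht : |t - π i s ai| ≤ ε) (k : ℕ) :
    ∑ s', |wfun P π i s ai s0 k t s'| ≤ (k : ℝ) * (1 + ε) ^ k := by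
  have hε : 0 ≤ ε := le_trans (abs_nonneg _) ht
  induction k with
  | zero => simp [wfun]
  | succ k ih =>
      push_cast
      have hchi : ∀ s', 0 ≤ ∑ a, jointProb (devPolicy π i ai) s a * P s a s' :=
        fun s' => mrow_nonneg (devPolicy_isPolicy hπ i ai) hP s s'
      have hchisum : ∑ s', ∑ a, jointProb (devPolicy π i ai) s a * P s a s' = 1 :=
        mrow_sum (devPolicy_isPolicy hπ i ai) hP s
      have hnu : |((stepDist P (updateEntry π i s ai t))^[k] (dirac s0)) s| ≤ (1 + ε) ^ k := by
        refine (abs_le_l1 _ s).trans ?_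
        have := abs_iterU_le hπ hP i s ai ht (dirac s0) k
        rwa [dirac_l1, mul_one] at this
      have hstep : ∑ s', |stepDist P (updateEntry π i s ai t) (wfun P π i s ai s0 k t) s'|
          ≤ (1 + ε) * ((k : ℝ) * (1 + ε) ^ k) :=
        (abs_stepU_le hπ hP i s ai ht _).trans (by
          refine mul_le_mul_of_nonneg_left ih (by linarith))
      calc ∑ s', |wfun P π i s ai s0 (k+1) t s'|
          ≤ (∑ s', |stepDist P (updateEntry π i s ai t) (wfun P π i s ai s0 k t) s'|)
            + ∑ s', |((stepDist P (updateEntry π i s ai t))^[k] (dirac s0)) s|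
              * (∑ a, jointProb (devPolicy π i ai) s a * P s a s') := by
            rw [← Finset.sum_add_distrib]
            refine Finset.sum_le_sum fun s' _ => ?_
            show |wfun P π i s ai s0 (k+1) t s'| ≤ _
            simp only [wfun]
            refine (abs_add_le _ _).trans ?_
            rw [abs_mul, abs_of_nonneg (hchi s')]
        _ ≤ (1 + ε) * ((k : ℝ) * (1 + ε) ^ k) + (1 + ε) ^ k := by
            refine add_le_add hstep ?_
            rw [← Finset.mul_sum, hchisum, mul_one]
            exact hnu
        _ ≤ ((k : ℝ) + 1) * (1 + ε) ^ (k + 1) := by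
            have h1 : (1:ℝ) + ε ≥ 1 := by linarith
            have h2 : (0:ℝ) ≤ (1 + ε) ^ k := by positivity
            have h3 : (1 + ε) ^ k ≤ (1 + ε) ^ (k+1) := by
              calc (1+ε)^k = 1 * (1+ε)^k := by ring
                _ ≤ (1+ε) * (1+ε)^k := by nlinarith
                _ = (1+ε)^(k+1) := by ring
            have h4 : (0:ℝ) ≤ (k:ℝ) := Nat.cast_nonneg k
            calc (1 + ε) * ((k : ℝ) * (1 + ε) ^ k) + (1 + ε) ^ k
                = (k:ℝ) * (1 + ε) ^ (k+1) + (1 + ε) ^ k := by ring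
              _ ≤ (k:ℝ) * (1 + ε) ^ (k+1) + (1 + ε) ^ (k+1) := by linarith
              _ = ((k:ℝ) + 1) * (1 + ε) ^ (k + 1) := by ring
      
lemma hasDerivAt_term (u : I → S → (∀ i, A i) → ℝ) (P : S → (∀ i, A i) → S → ℝ)
    (δ : ℝ) (π : ∀ i, S → A i → ℝ) (i : I) (s : S) (ai : A i) (s0 : S) (k : ℕ) (x : ℝ) :
    HasDerivAt (fun t => δ ^ k * expReward (u i) (updateEntry π i s ai t)
        ((stepDist P (updateEntry π i s ai t))^[k] (dirac s0)))
      (δ ^ k * ((∑ s', wfun P π i s ai s0 k x s' * (∑ a, jointProb π s' a * u i s' a))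
        + (1 * (((stepDist P (updateEntry π i s ai x))^[k] (dirac s0)) s
              * ∑ a, jointProb (devPolicy π i ai) s a * u i s a)
          + (x - π i s ai) * (wfun P π i s ai s0 k x s
              * ∑ a, jointProb (devPolicy π i ai) s a * u i s a)))) x := by
  have hfun : ∀ t : ℝ, expReward (u i) (updateEntry π i s ai t)
        ((stepDist P (updateEntry π i s ai t))^[k] (dirac s0))
      = (∑ s', ((stepDist P (updateEntry π i s ai t))^[k] (dirac s0)) s'
            * (∑ a, jointProb π s' a * u i s' a))
        + (t - π i s ai) * (((stepDist P (updateEntry π i s ai t))^[k] (dirac s0)) s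
            * ∑ a, jointProb (devPolicy π i ai) s a * u i s a) := by
    intro t
    rw [reward_decomp u π i s ai P]
    rfl
  simp only [hfun]
  refine HasDerivAt.const_mul _ ?_
  refine HasDerivAt.add ?_ ?_
  · exact HasDerivAt.fun_sum fun s' _ => (hasDerivAt_iter P π i s ai s0 k x s').mul_const _
  · exact ((hasDerivAt_id x).sub_const (π i s ai)).mul
      ((hasDerivAt_iter P π i s ai s0 k x s).mul_const _)

lemma step_lin {ι : Type*} (P : S → (∀ i, A i) → S → ℝ) (π' : ∀ i, S → A i → ℝ)
    (F : Finset ι) (c : ι → ℝ) (g : ι → S → ℝ) (s' : S) :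
    stepDist P π' (fun x => ∑ z ∈ F, c z * g z x) s'
      = ∑ z ∈ F, c z * stepDist P π' (g z) s' := by
  unfold stepDist
  calc ∑ x, (∑ z ∈ F, c z * g z x) * ∑ a, jointProb π' x a * P x a s'
      = ∑ x, ∑ z ∈ F, c z * (g z x * ∑ a, jointProb π' x a * P x a s') := by
        refine Finset.sum_congr rfl fun x _ => ?_
        rw [Finset.sum_mul]
        exact Finset.sum_congr rfl fun z _ => by ring
    _ = ∑ z ∈ F, ∑ x, c z * (g z x * ∑ a, jointProb π' x a * P x a s') := Finset.sum_comm
    _ = ∑ z ∈ F, c z * stepDist P π' (g z) s' := by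
        refine Finset.sum_congr rfl fun z _ => ?_
        rw [← Finset.mul_sum]
        rfl

lemma iter_lin {ι : Type*} (P : S → (∀ i, A i) → S → ℝ) (π' : ∀ i, S → A i → ℝ)
    (F : Finset ι) (c : ι → ℝ) (g : ι → S → ℝ) (l : ℕ) :
    (stepDist P π')^[l] (fun x => ∑ z ∈ F, c z * g z x)
      = fun x => ∑ z ∈ F, c z * ((stepDist P π')^[l] (g z)) x := by
  induction l with
  | zero => simp
  | succ l ih =>
      rw [Function.iterate_succ_apply', ih]
      funext x
      rw [step_lin]
      exact Finset.sum_congr rfl fun z _ => by rw [Function.iterate_succ_apply']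

lemma wfun_t0 (P : S → (∀ i, A i) → S → ℝ) (π : ∀ i, S → A i → ℝ)
    (i : I) (s : S) (ai : A i) (s0 : S) (k : ℕ) :
    wfun P π i s ai s0 k (π i s ai)
      = fun s' => ∑ j ∈ Finset.range k, ((stepDist P π)^[j] (dirac s0)) s
          * ((stepDist P π)^[k - 1 - j]
              (fun s'' => ∑ a, jointProb (devPolicy π i ai) s a * P s a s'')) s' := by
  induction k with
  | zero => funext s'; simp [wfun]
  | succ k ih =>
      funext s'
      show stepDist P (updateEntry π i s ai (π i s ai)) (wfun P π i s ai s0 k (π i s ai)) s'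
          + ((stepDist P (updateEntry π i s ai (π i s ai)))^[k] (dirac s0)) s
            * ∑ a, jointProb (devPolicy π i ai) s a * P s a s' = _
      rw [updateEntry_self, ih, step_lin, Finset.sum_range_succ]
      congr 1
      · refine Finset.sum_congr rfl fun j hj => ?_
        have hj' : j < k := Finset.mem_range.mp hj
        rw [← Function.iterate_succ_apply' (stepDist P π)]
        have he : (k - 1 - j).succ = k + 1 - 1 - j := by omega
        rw [he]
      · have : k + 1 - 1 - k = 0 := by omega
        rw [this, Function.iterate_zero_apply]

lemma abs_dot_le (w r : S → ℝ) :
    |∑ x, w x * r x| ≤ (∑ x, |w x|) * ∑ x, |r x| := by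
  calc |∑ x, w x * r x| ≤ ∑ x, |w x| * |r x| := by
        refine (Finset.abs_sum_le_sum_abs _ _).trans (le_of_eq ?_)
        exact Finset.sum_congr rfl fun x _ => abs_mul _ _
    _ ≤ ∑ x, |w x| * ∑ y, |r y| := by
        refine Finset.sum_le_sum fun x _ => ?_
        exact mul_le_mul_of_nonneg_left (abs_le_l1 r x) (abs_nonneg _)
    _ = _ := (Finset.sum_mul _ _ _).symm

lemma summable_V_terms {π' : ∀ i, S → A i → ℝ} {P : S → (∀ i, A i) → S → ℝ} {δ : ℝ}
    (hπ' : IsPolicy π') (hP : IsKernel P) (hδ0 : 0 ≤ δ) (hδ1 : δ < 1)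
    (f : S → (∀ i, A i) → ℝ) (s0 : S) :
    Summable (fun k : ℕ => δ ^ k * expReward f π' ((stepDist P π')^[k] (dirac s0))) := by
  refine Summable.of_norm_bounded
    (g := fun k => (∑ s1, |∑ a, jointProb π' s1 a * f s1 a|) * δ ^ k)
    ((summable_geometric_of_lt_one hδ0 hδ1).mul_left _) fun k => ?_
  rw [Real.norm_eq_abs, abs_mul, abs_pow, abs_of_nonneg hδ0]
  calc δ ^ k * |expReward f π' ((stepDist P π')^[k] (dirac s0))|
      ≤ δ ^ k * ((∑ s1, |∑ a, jointProb π' s1 a * f s1 a|) * 1) := by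
        refine mul_le_mul_of_nonneg_left ?_ (by positivity)
        refine (abs_expReward_le f π' _).trans ?_
        refine mul_le_mul_of_nonneg_left ?_ (Finset.sum_nonneg fun _ _ => abs_nonneg _)
        have := abs_iter_le hπ' hP (dirac s0) k
        rwa [dirac_l1] at this
    _ = (∑ s1, |∑ a, jointProb π' s1 a * f s1 a|) * δ ^ k := by ring

lemma Q_repr (u : I → S → (∀ i, A i) → ℝ) (P : S → (∀ i, A i) → S → ℝ) (δ : ℝ)
    (π : ∀ i, S → A i → ℝ) (i : I) (s : S) (ai : A i) :
    Q u P δ π i s ai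
      = (∑ a, jointProb (devPolicy π i ai) s a * u i s a)
        + δ * ∑ s', (∑ a, jointProb (devPolicy π i ai) s a * P s a s')
            * V u P δ π i s' := by
  unfold Q
  have l : ∀ (c : ℝ) (f : S → ℝ), c * ∑ s', f s' = ∑ s', c * f s' :=
    fun c f => Finset.mul_sum _ _ _
  have key : ∀ a, jointProb (devPolicy π i ai) s a
        * (u i s a + δ * ∑ s', P s a s' * V u P δ π i s')
      = jointProb (devPolicy π i ai) s a * u i s a
        + ∑ s', δ * ((jointProb (devPolicy π i ai) s a * P s a s') * V u P δ π i s') := by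
    intro a
    rw [mul_add, l, l]
    congr 1
    exact Finset.sum_congr rfl fun s' _ => by ring
  rw [Finset.sum_congr rfl fun a _ => key a, Finset.sum_add_distrib]
  congr 1
  rw [Finset.sum_comm, l]
  refine Finset.sum_congr rfl fun s' _ => ?_
  rw [Finset.sum_mul, Finset.mul_sum]

lemma per_state (u : I → S → (∀ i, A i) → ℝ) (P : S → (∀ i, A i) → S → ℝ)
    {δ : ℝ} (π : ∀ i, S → A i → ℝ)
    (hδ0 : 0 < δ) (hδ1 : δ < 1) (hπ : IsPolicy π) (hP : IsKernel P)
    (i : I) (s : S) (ai : A i) (s0 : S) :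
    HasDerivAt (fun t => V u P δ (updateEntry π i s ai t) i s0)
      ((∑' j : ℕ, δ ^ j * ((stepDist P π)^[j] (dirac s0)) s) * Q u P δ π i s ai)
      (π i s ai) := by
  classical
  set ε : ℝ := (1 - δ) / (2 * δ) with hεdef
  have hεpos : 0 < ε := by
    apply div_pos <;> linarith
  have hqnn : 0 ≤ δ * (1 + ε) := by positivity
  have hq1 : δ * (1 + ε) < 1 := by
    have h2 : δ * (1 + ε) = δ + (1 - δ) / 2 := by
      rw [hεdef]; field_simp
    rw [h2]; linarith
  -- abbreviations (only as meta-level names via generalize is too fragile; we inline)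
  have hR0 : 0 ≤ ∑ s1, |∑ a, jointProb π s1 a * u i s1 a| :=
    Finset.sum_nonneg fun _ _ => abs_nonneg _
  -- summable bound for the derivatives
  have hs1 : Summable (fun k : ℕ => (k : ℝ) * (δ * (1 + ε)) ^ k) := by
    have := summable_pow_mul_geometric_of_norm_lt_one (R := ℝ) 1
      (r := δ * (1 + ε)) (by rw [Real.norm_eq_abs, abs_of_nonneg hqnn]; exact hq1)
    simpa using this
  have hs2 : Summable (fun k : ℕ => (δ * (1 + ε)) ^ k) :=
    summable_geometric_of_lt_one hqnn hq1
  have hbs : Summable (fun k : ℕ =>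
      ((∑ s1, |∑ a, jointProb π s1 a * u i s1 a|)
        + |∑ a, jointProb (devPolicy π i ai) s a * u i s a|
        + ε * |∑ a, jointProb (devPolicy π i ai) s a * u i s a|)
      * ((k : ℝ) * (δ * (1 + ε)) ^ k + (δ * (1 + ε)) ^ k)) :=
    (hs1.add hs2).mul_left _
  -- the uniform derivative bound on the ball
  have hg' : ∀ (k : ℕ) (y : ℝ), y ∈ Metric.ball (π i s ai) ε →
      ‖δ ^ k * ((∑ s', wfun P π i s ai s0 k y s' * (∑ a, jointProb π s' a * u i s' a))
        + (1 * (((stepDist P (updateEntry π i s ai y))^[k] (dirac s0)) s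
              * ∑ a, jointProb (devPolicy π i ai) s a * u i s a)
          + (y - π i s ai) * (wfun P π i s ai s0 k y s
              * ∑ a, jointProb (devPolicy π i ai) s a * u i s a)))‖
      ≤ ((∑ s1, |∑ a, jointProb π s1 a * u i s1 a|)
        + |∑ a, jointProb (devPolicy π i ai) s a * u i s a|
        + ε * |∑ a, jointProb (devPolicy π i ai) s a * u i s a|)
      * ((k : ℝ) * (δ * (1 + ε)) ^ k + (δ * (1 + ε)) ^ k) := by
    intro k y hy
    have hyε : |y - π i s ai| ≤ ε := by
      rw [← Real.dist_eq]; exact le_of_lt (Metric.mem_ball.mp hy)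
    have hw : ∑ s', |wfun P π i s ai s0 k y s'| ≤ (k : ℝ) * (1 + ε) ^ k :=
      wfun_l1 hπ hP i s ai s0 hyε k
    have hnu : |((stepDist P (updateEntry π i s ai y))^[k] (dirac s0)) s| ≤ (1 + ε) ^ k := by
      refine (abs_le_l1 _ s).trans ?_
      have := abs_iterU_le hπ hP i s ai hyε (dirac s0) k
      rwa [dirac_l1, mul_one] at this
    have hKnn : (0:ℝ) ≤ (k : ℝ) := Nat.cast_nonneg k
    have hPεnn : (0:ℝ) ≤ (1 + ε) ^ k := by positivity
    have habs : ‖δ ^ k * ((∑ s', wfun P π i s ai s0 k y s' * (∑ a, jointProb π s' a * u i s' a))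
        + (1 * (((stepDist P (updateEntry π i s ai y))^[k] (dirac s0)) s
              * ∑ a, jointProb (devPolicy π i ai) s a * u i s a)
          + (y - π i s ai) * (wfun P π i s ai s0 k y s
              * ∑ a, jointProb (devPolicy π i ai) s a * u i s a)))‖
        ≤ δ ^ k * (((k : ℝ) * (1 + ε) ^ k) * (∑ s1, |∑ a, jointProb π s1 a * u i s1 a|)
          + ((1 + ε) ^ k * |∑ a, jointProb (devPolicy π i ai) s a * u i s a|
            + ε * (((k : ℝ) * (1 + ε) ^ k)
              * |∑ a, jointProb (devPolicy π i ai) s a * u i s a|))) := by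
      rw [Real.norm_eq_abs, abs_mul, abs_pow, abs_of_nonneg hδ0.le]
      refine mul_le_mul_of_nonneg_left ?_ (by positivity)
      refine (abs_add_le _ _).trans (add_le_add ?_ ((abs_add_le _ _).trans (add_le_add ?_ ?_)))
      · exact (abs_dot_le _ _).trans (mul_le_mul_of_nonneg_right hw hR0)
      · rw [one_mul, abs_mul]
        exact mul_le_mul_of_nonneg_right hnu (abs_nonneg _)
      · rw [abs_mul, abs_mul]
        refine mul_le_mul hyε ?_ (by positivity) hεpos.le
        exact mul_le_mul_of_nonneg_right ((abs_le_l1 _ s).trans hw) (abs_nonneg _)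
    refine habs.trans ?_
    have hqk : δ ^ k * (1 + ε) ^ k = (δ * (1 + ε)) ^ k := (mul_pow _ _ _).symm
    have hPq : (0:ℝ) ≤ (δ * (1 + ε)) ^ k := pow_nonneg hqnn k
    have he0nn : (0:ℝ) ≤ |∑ a, jointProb (devPolicy π i ai) s a * u i s a| := abs_nonneg _
    calc δ ^ k * (((k : ℝ) * (1 + ε) ^ k) * (∑ s1, |∑ a, jointProb π s1 a * u i s1 a|)
          + ((1 + ε) ^ k * |∑ a, jointProb (devPolicy π i ai) s a * u i s a|
            + ε * (((k : ℝ) * (1 + ε) ^ k)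
              * |∑ a, jointProb (devPolicy π i ai) s a * u i s a|)))
        = (∑ s1, |∑ a, jointProb π s1 a * u i s1 a|) * ((k:ℝ) * (δ ^ k * (1 + ε) ^ k))
          + |∑ a, jointProb (devPolicy π i ai) s a * u i s a| * (δ ^ k * (1 + ε) ^ k)
          + ε * |∑ a, jointProb (devPolicy π i ai) s a * u i s a|
            * ((k:ℝ) * (δ ^ k * (1 + ε) ^ k)) := by ring
      _ = (∑ s1, |∑ a, jointProb π s1 a * u i s1 a|) * ((k:ℝ) * (δ * (1 + ε)) ^ k)
          + |∑ a, jointProb (devPolicy π i ai) s a * u i s a| * (δ * (1 + ε)) ^ k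
          + ε * |∑ a, jointProb (devPolicy π i ai) s a * u i s a|
            * ((k:ℝ) * (δ * (1 + ε)) ^ k) := by rw [hqk]
      _ ≤ _ := by nlinarith [mul_nonneg hR0 hPq, mul_nonneg (mul_nonneg hKnn he0nn) hPq,
          mul_nonneg (mul_nonneg hεpos.le he0nn) hPq]
  -- summability of the series at the center point
  have hg0 : Summable (fun k : ℕ => δ ^ k * expReward (u i)
      (updateEntry π i s ai (π i s ai))
      ((stepDist P (updateEntry π i s ai (π i s ai)))^[k] (dirac s0))) := by
    rw [updateEntry_self]
    exact summable_V_terms hπ hP hδ0.le hδ1 (u i) s0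
  have main := hasDerivAt_tsum_of_isPreconnected hbs Metric.isOpen_ball
    (convex_ball (π i s ai) ε).isPreconnected
    (fun k y _ => hasDerivAt_term u P δ π i s ai s0 k y) hg'
    (Metric.mem_ball_self hεpos) hg0 (Metric.mem_ball_self hεpos)
  -- now identify the derivative value
  refine main.congr_deriv ?_
  symm
  -- goal: target = ∑' k, g' k t0
  have hg'0 : ∀ k : ℕ, δ ^ k * ((∑ s', wfun P π i s ai s0 k (π i s ai) s'
          * (∑ a, jointProb π s' a * u i s' a))
        + (1 * (((stepDist P (updateEntry π i s ai (π i s ai)))^[k] (dirac s0)) s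
              * ∑ a, jointProb (devPolicy π i ai) s a * u i s a)
          + (π i s ai - π i s ai) * (wfun P π i s ai s0 k (π i s ai) s
              * ∑ a, jointProb (devPolicy π i ai) s a * u i s a)))
      = δ ^ k * (∑ s', wfun P π i s ai s0 k (π i s ai) s'
          * (∑ a, jointProb π s' a * u i s' a))
        + (δ ^ k * ((stepDist P π)^[k] (dirac s0)) s)
          * ∑ a, jointProb (devPolicy π i ai) s a * u i s a := by
    intro k
    rw [updateEntry_self]
    ring
  rw [tsum_congr hg'0]
  -- summability of the coefficient sequences
  have hnu1 : ∀ j : ℕ, |((stepDist P π)^[j] (dirac s0)) s| ≤ 1 := fun j =>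
    (abs_le_l1 _ s).trans ((abs_iter_le hπ hP (dirac s0) j).trans (le_of_eq (dirac_l1 s0)))
  have hak_norm : Summable (fun j : ℕ => ‖δ ^ j * ((stepDist P π)^[j] (dirac s0)) s‖) := by
    refine Summable.of_nonneg_of_le (fun j => norm_nonneg _) (fun j => ?_)
      (summable_geometric_of_lt_one hδ0.le hδ1)
    rw [Real.norm_eq_abs, abs_mul, abs_pow, abs_of_nonneg hδ0.le]
    calc δ ^ j * |((stepDist P π)^[j] (dirac s0)) s| ≤ δ ^ j * 1 :=
          mul_le_mul_of_nonneg_left (hnu1 j) (by positivity)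
      _ = δ ^ j := mul_one _
  have hak : Summable (fun j : ℕ => δ ^ j * ((stepDist P π)^[j] (dirac s0)) s) :=
    hak_norm.of_norm
  have hchiabs : ∑ s'', |∑ a, jointProb (devPolicy π i ai) s a * P s a s''| = 1 := by
    rw [Finset.sum_congr rfl fun s'' _ =>
      abs_of_nonneg (mrow_nonneg (devPolicy_isPolicy hπ i ai) hP s s'')]
    exact mrow_sum (devPolicy_isPolicy hπ i ai) hP s
  have hbk_norm : Summable (fun l : ℕ => ‖δ ^ l * ∑ s',
      ((stepDist P π)^[l] (fun s'' => ∑ a, jointProb (devPolicy π i ai) s a * P s a s'')) s'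
        * (∑ a, jointProb π s' a * u i s' a)‖) := by
    refine Summable.of_nonneg_of_le (fun l => norm_nonneg _) (fun l => ?_)
      ((summable_geometric_of_lt_one hδ0.le hδ1).mul_left
        (∑ s1, |∑ a, jointProb π s1 a * u i s1 a|))
    rw [Real.norm_eq_abs, abs_mul, abs_pow, abs_of_nonneg hδ0.le]
    calc δ ^ l * |∑ s', ((stepDist P π)^[l]
            (fun s'' => ∑ a, jointProb (devPolicy π i ai) s a * P s a s'')) s'
            * (∑ a, jointProb π s' a * u i s' a)|
        ≤ δ ^ l * (1 * ∑ s1, |∑ a, jointProb π s1 a * u i s1 a|) := by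
          refine mul_le_mul_of_nonneg_left ?_ (by positivity)
          refine (abs_dot_le _ _).trans (mul_le_mul_of_nonneg_right ?_ hR0)
          exact (abs_iter_le hπ hP _ l).trans (le_of_eq hchiabs)
      _ = (∑ s1, |∑ a, jointProb π s1 a * u i s1 a|) * δ ^ l := by ring
  have hbk : Summable (fun l : ℕ => δ ^ l * ∑ s',
      ((stepDist P π)^[l] (fun s'' => ∑ a, jointProb (devPolicy π i ai) s a * P s a s'')) s'
        * (∑ a, jointProb π s' a * u i s' a)) := hbk_norm.of_norm
  -- Cauchy product
  have hprod := tsum_mul_tsum_eq_tsum_sum_range_of_summable_norm hak_norm hbk_norm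
  have hCP : Summable (fun n : ℕ => ∑ p ∈ Finset.range (n + 1),
      (δ ^ p * ((stepDist P π)^[p] (dirac s0)) s) * (δ ^ (n - p) * ∑ s',
        ((stepDist P π)^[n - p] (fun s'' => ∑ a, jointProb (devPolicy π i ai) s a * P s a s'')) s'
          * (∑ a, jointProb π s' a * u i s' a))) :=
    (summable_norm_sum_mul_range_of_summable_norm hak_norm hbk_norm).of_norm
  -- closed form for the inner product against wfun at the base point
  have hWr : ∀ k : ℕ, (∑ s', wfun P π i s ai s0 k (π i s ai) s'
        * (∑ a, jointProb π s' a * u i s' a))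
      = ∑ j ∈ Finset.range k, ((stepDist P π)^[j] (dirac s0)) s
          * ∑ s', ((stepDist P π)^[k - 1 - j]
              (fun s'' => ∑ a, jointProb (devPolicy π i ai) s a * P s a s'')) s'
            * (∑ a, jointProb π s' a * u i s' a) := by
    intro k
    rw [wfun_t0]
    calc ∑ s', (∑ j ∈ Finset.range k, ((stepDist P π)^[j] (dirac s0)) s
            * ((stepDist P π)^[k - 1 - j]
                (fun s'' => ∑ a, jointProb (devPolicy π i ai) s a * P s a s'')) s')
          * (∑ a, jointProb π s' a * u i s' a)
        = ∑ s', ∑ j ∈ Finset.range k, ((stepDist P π)^[j] (dirac s0)) s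
            * (((stepDist P π)^[k - 1 - j]
                (fun s'' => ∑ a, jointProb (devPolicy π i ai) s a * P s a s'')) s'
              * (∑ a, jointProb π s' a * u i s' a)) := by
          refine Finset.sum_congr rfl fun s' _ => ?_
          rw [Finset.sum_mul]
          exact Finset.sum_congr rfl fun j _ => by ring
      _ = ∑ j ∈ Finset.range k, ∑ s', ((stepDist P π)^[j] (dirac s0)) s
            * (((stepDist P π)^[k - 1 - j]
                (fun s'' => ∑ a, jointProb (devPolicy π i ai) s a * P s a s'')) s'
              * (∑ a, jointProb π s' a * u i s' a)) := Finset.sum_comm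
      _ = _ := by
          refine Finset.sum_congr rfl fun j _ => ?_
          rw [← Finset.mul_sum]
  have hA : ∀ k : ℕ, δ ^ k * (∑ s', wfun P π i s ai s0 k (π i s ai) s'
        * (∑ a, jointProb π s' a * u i s' a))
      = δ * ∑ j ∈ Finset.range k, (δ ^ j * ((stepDist P π)^[j] (dirac s0)) s)
          * (δ ^ (k - 1 - j) * ∑ s', ((stepDist P π)^[k - 1 - j]
              (fun s'' => ∑ a, jointProb (devPolicy π i ai) s a * P s a s'')) s'
            * (∑ a, jointProb π s' a * u i s' a)) := by
    intro k
    rw [hWr, Finset.mul_sum, Finset.mul_sum]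
    refine Finset.sum_congr rfl fun j hj => ?_
    have hj' : j < k := Finset.mem_range.mp hj
    have hkk : j + (k - 1 - j) + 1 = k := by omega
    have hpow : δ ^ k = δ * (δ ^ j * δ ^ (k - 1 - j)) := by
      calc δ ^ k = δ ^ (j + (k - 1 - j) + 1) := by rw [hkk]
        _ = δ * (δ ^ j * δ ^ (k - 1 - j)) := by ring
    rw [hpow]; ring
  -- summability of the two pieces
  have hCPm : Summable (fun k : ℕ => ∑ j ∈ Finset.range k,
      (δ ^ j * ((stepDist P π)^[j] (dirac s0)) s) * (δ ^ (k - 1 - j) * ∑ s',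
        ((stepDist P π)^[k - 1 - j]
          (fun s'' => ∑ a, jointProb (devPolicy π i ai) s a * P s a s'')) s'
          * (∑ a, jointProb π s' a * u i s' a))) := by
    refine (summable_nat_add_iff 1).mp (hCP.congr fun n => ?_)
    rfl
  have hAsum : Summable (fun k : ℕ => δ ^ k * (∑ s', wfun P π i s ai s0 k (π i s ai) s'
      * (∑ a, jointProb π s' a * u i s' a))) :=
    (hCPm.mul_left δ).congr fun k => (hA k).symm
  have hBsum : Summable (fun k : ℕ => (δ ^ k * ((stepDist P π)^[k] (dirac s0)) s)
      * ∑ a, jointProb (devPolicy π i ai) s a * u i s a) := hak.mul_right _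
  rw [Summable.tsum_add hAsum hBsum, tsum_mul_right]
  -- evaluate the first tsum via the Cauchy product
  have hAtsum : ∑' k : ℕ, δ ^ k * (∑ s', wfun P π i s ai s0 k (π i s ai) s'
        * (∑ a, jointProb π s' a * u i s' a))
      = δ * ((∑' j : ℕ, δ ^ j * ((stepDist P π)^[j] (dirac s0)) s)
          * ∑' l : ℕ, δ ^ l * ∑ s', ((stepDist P π)^[l]
              (fun s'' => ∑ a, jointProb (devPolicy π i ai) s a * P s a s'')) s'
            * (∑ a, jointProb π s' a * u i s' a)) := by
    rw [tsum_congr hA, tsum_mul_left]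
    congr 1
    rw [Summable.tsum_eq_zero_add hCPm]
    simp only [Finset.range_zero, Finset.sum_empty, zero_add]
    rw [hprod]
    refine tsum_congr fun b => Finset.sum_congr rfl fun j hj => ?_
    have hb : b + 1 - 1 - j = b - j := by omega
    rw [hb]
  rw [hAtsum]
  -- evaluate the inner tsum as a finite combination of values
  have hchi_repr : (fun s'' : S => ∑ a, jointProb (devPolicy π i ai) s a * P s a s'')
      = fun x => ∑ z, (∑ a, jointProb (devPolicy π i ai) s a * P s a z) * dirac z x := by
    funext x
    unfold dirac
    rw [Finset.sum_congr rfl fun z _ => (by rw [mul_ite, mul_one, mul_zero] :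
      (∑ a, jointProb (devPolicy π i ai) s a * P s a z) * (if x = z then (1:ℝ) else 0)
        = if x = z then ∑ a, jointProb (devPolicy π i ai) s a * P s a z else 0)]
    rw [Finset.sum_ite_eq]
    simp
  have hbk_eq : ∀ l : ℕ, δ ^ l * ∑ s', ((stepDist P π)^[l]
        (fun s'' => ∑ a, jointProb (devPolicy π i ai) s a * P s a s'')) s'
          * (∑ a, jointProb π s' a * u i s' a)
      = ∑ z, (∑ a, jointProb (devPolicy π i ai) s a * P s a z)
          * (δ ^ l * expReward (u i) π ((stepDist P π)^[l] (dirac z))) := by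
    intro l
    rw [hchi_repr, iter_lin]
    unfold expReward
    have hswap : ∑ s', (∑ z, (∑ a, jointProb (devPolicy π i ai) s a * P s a z)
          * ((stepDist P π)^[l] (dirac z)) s') * (∑ a, jointProb π s' a * u i s' a)
        = ∑ z, (∑ a, jointProb (devPolicy π i ai) s a * P s a z)
            * ∑ s', ((stepDist P π)^[l] (dirac z)) s' * (∑ a, jointProb π s' a * u i s' a) := by
      calc ∑ s', (∑ z, (∑ a, jointProb (devPolicy π i ai) s a * P s a z)
              * ((stepDist P π)^[l] (dirac z)) s') * (∑ a, jointProb π s' a * u i s' a)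
          = ∑ s', ∑ z, (∑ a, jointProb (devPolicy π i ai) s a * P s a z)
              * (((stepDist P π)^[l] (dirac z)) s' * (∑ a, jointProb π s' a * u i s' a)) := by
            refine Finset.sum_congr rfl fun s' _ => ?_
            rw [Finset.sum_mul]
            exact Finset.sum_congr rfl fun z _ => by ring
        _ = ∑ z, ∑ s', (∑ a, jointProb (devPolicy π i ai) s a * P s a z)
              * (((stepDist P π)^[l] (dirac z)) s' * (∑ a, jointProb π s' a * u i s' a)) :=
            Finset.sum_comm
        _ = _ := by
            refine Finset.sum_congr rfl fun z _ => ?_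
            rw [← Finset.mul_sum]
    rw [hswap, Finset.mul_sum]
    exact Finset.sum_congr rfl fun z _ => by ring
  have hV_summ : ∀ z : S, Summable (fun l : ℕ =>
      (∑ a, jointProb (devPolicy π i ai) s a * P s a z)
        * (δ ^ l * expReward (u i) π ((stepDist P π)^[l] (dirac z)))) := fun z =>
    (summable_V_terms hπ hP hδ0.le hδ1 (u i) z).mul_left _
  have hbkV : (∑' l : ℕ, δ ^ l * ∑ s', ((stepDist P π)^[l]
        (fun s'' => ∑ a, jointProb (devPolicy π i ai) s a * P s a s'')) s'
          * (∑ a, jointProb π s' a * u i s' a))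
      = ∑ z, (∑ a, jointProb (devPolicy π i ai) s a * P s a z) * V u P δ π i z := by
    rw [tsum_congr hbk_eq, Summable.tsum_finsetSum fun z _ => hV_summ z]
    refine Finset.sum_congr rfl fun z _ => ?_
    rw [tsum_mul_left]
    rfl
  rw [hbkV, Q_repr]
  ring


end Aux

/-- policy gradient theorem for Markov games:
`∂V_i(μ,π)/∂π_i(s,a_i) = (1/(1-δ)) d_μ^π(s) Q_i(s,a_i;π)`. -/
theorem policy_gradient (u : I → S → (∀ i, A i) → ℝ)
    (P : S → (∀ i, A i) → S → ℝ) (δ : ℝ) (π : ∀ i, S → A i → ℝ) (μ : S → ℝ)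
    (hδ0 : 0 < δ) (hδ1 : δ < 1) (hπ : IsPolicy π) (hP : IsKernel P)
    (hμ : simplex μ) (i : I) (s : S) (ai : A i) :
    HasDerivAt (fun t => Vmu u P δ (updateEntry π i s ai t) i μ)
      (1 / (1 - δ) * dvisit P δ π μ s * Q u P δ π i s ai) (π i s ai) := by
  have hsum : HasDerivAt (fun t => ∑ s0, μ s0 * V u P δ (updateEntry π i s ai t) i s0)
      (∑ s0, μ s0 * ((∑' j : ℕ, δ ^ j * ((stepDist P π)^[j] (dirac s0)) s)
        * Q u P δ π i s ai)) (π i s ai) :=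
    HasDerivAt.fun_sum fun s0 _ =>
      (per_state u P π hδ0 hδ1 hπ hP i s ai s0).const_mul (μ s0)
  have hval : ∑ s0, μ s0 * ((∑' j : ℕ, δ ^ j * ((stepDist P π)^[j] (dirac s0)) s)
        * Q u P δ π i s ai)
      = 1 / (1 - δ) * dvisit P δ π μ s * Q u P δ π i s ai := by
    unfold dvisit
    have h1 : 1 / (1 - δ) * ((1 - δ)
          * ∑ s0, μ s0 * ∑' k : ℕ, δ ^ k * ((stepDist P π)^[k] (dirac s0)) s)
          * Q u P δ π i s ai
        = (∑ s0, μ s0 * ∑' k : ℕ, δ ^ k * ((stepDist P π)^[k] (dirac s0)) s)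
          * Q u P δ π i s ai := by
      have hne : (1:ℝ) - δ ≠ 0 := by intro h; linarith [h]
      field_simp
    rw [h1, Finset.sum_mul]
    exact Finset.sum_congr rfl fun s0 _ => by ring
  exact hval ▸ hsum

end MPG
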